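/- Let V = V₀ ⊕ V₁ be a finite-dimensional complex vector space and let e ∈ End(V) be nilpotent with e(V₀) ⊆ V₀ and e(V₁) ⊆ V₁. Then there exists h ∈ End(V) with h(V₀) ⊆ V₀ and h(V₁) ⊆ V₁, h diagonalizable with all eigenvalues even integers, ⁅h,e⁆ = 2 • e, and such that the pair (h,e) is good: ad e is injective from the j-eigenspace of ad h to the (j+2)-eigenspace for every integer j ≤ -1 and surjective for every integer j ≥ -1. In particular, the grading determined by h is even (all eigenvalues of ad h are even integers). (Every nilpotent even element of gl(m|n) has a good even ℤ-grading.) -/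

import Mathlib

/-- The set of `ad h`-eigenvectors of `End(V)` with eigenvalue `j ∈ ℤ`:
the `j`-th graded piece of the `ℤ`-grading of `End(V)` determined by `h`. -/
def gradedPiece {V : Type*} [AddCommGroup V] [Module ℂ V]
    (h : Module.End ℂ V) (j : ℤ) : Set (Module.End ℂ V) :=
  {x | ⁅h, x⁆ = (j : ℂ) • x}

/-- The pair `(h, e)` is *good* if `ad e` is injective from the `j`-eigenspace of
`ad h` to the `(j+2)`-eigenspace for every integer `j ≤ -1`, and surjective onto the
`(j+2)`-eigenspace for every integer `j ≥ -1`. -/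
def IsGoodPair {V : Type*} [AddCommGroup V] [Module ℂ V]
    (h e : Module.End ℂ V) : Prop :=
  (∀ j : ℤ, j ≤ -1 →
    Set.InjOn (fun x : Module.End ℂ V => ⁅e, x⁆) (gradedPiece h j)) ∧
  (∀ j : ℤ, -1 ≤ j →
    Set.SurjOn (fun x : Module.End ℂ V => ⁅e, x⁆) (gradedPiece h j)
      (gradedPiece h (j + 2)))

noncomputable section AuxGoodGrading

open Module Submodule

universe u v

/-- Distributing a sigma type over a sum type. -/
def sigmaSumEquiv {α : Type*} {β : Type*} (γ : α ⊕ β → Type*) :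
    ((Σ a : α, γ (Sum.inl a)) ⊕ (Σ b : β, γ (Sum.inr b))) ≃ (Σ s : α ⊕ β, γ s) where
  toFun := Sum.elim (fun p => ⟨Sum.inl p.1, p.2⟩) (fun p => ⟨Sum.inr p.1, p.2⟩)
  invFun p := match p with
    | ⟨Sum.inl a, x⟩ => Sum.inl ⟨a, x⟩
    | ⟨Sum.inr b, x⟩ => Sum.inr ⟨b, x⟩
  left_inv := by rintro (⟨a, x⟩ | ⟨b, x⟩) <;> rfl
  right_inv := by rintro ⟨a | b, x⟩ <;> rfl

/-- `1` if `n` is even, `0` otherwise. -/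
def epsk (n : ℕ) : ℤ := if Even n then 1 else 0

lemma epsk_nonneg (n : ℕ) : 0 ≤ epsk n := by unfold epsk; split <;> omega

lemma epsk_le_one (n : ℕ) : epsk n ≤ 1 := by unfold epsk; split <;> omega

/-- The weight attached to the `i`-th vector of a Jordan block of size `k b`. -/
def lamOf {B : Type*} (k : B → ℕ) (p : (b : B) × Fin (k b)) : ℤ :=
  2 * (p.2 : ℕ) - (k p.1 : ℤ) + 1 + epsk (k p.1)

lemma lamOf_even {B : Type*} (k : B → ℕ) (p : (b : B) × Fin (k b)) :
    Even (lamOf k p) := by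
  simp only [lamOf, epsk]
  rcases Nat.even_or_odd (k p.1) with h | h
  · rw [if_pos h]
    obtain ⟨r, hr⟩ := h
    exact ⟨(p.2 : ℕ) - r + 1, by push_cast [hr]; ring⟩
  · rw [if_neg (Nat.not_even_iff_odd.mpr h)]
    obtain ⟨r, hr⟩ := h
    exact ⟨(p.2 : ℕ) - r, by push_cast [hr]; ring⟩

lemma lamOf_succ {B : Type*} (k : B → ℕ) (b : B) (i : ℕ) (h1 : i + 1 < k b)
    (h2 : i < k b) :
    lamOf k ⟨b, ⟨i + 1, h1⟩⟩ = lamOf k ⟨b, ⟨i, h2⟩⟩ + 2 := by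
  simp only [lamOf]; push_cast; ring

/-- Jordan-chain basis for the trivial space. -/
lemma jordan_subsingleton {W : Type u} [AddCommGroup W] [Module ℂ W]
    (hW : Subsingleton W) (f : Module.End ℂ W) :
    ∃ (B : Type u) (_ : Fintype B) (k : B → ℕ) (v : B → W),
      (∀ b, 0 < k b) ∧ (∀ b, (f ^ (k b)) (v b) = 0) ∧
      LinearIndependent ℂ (fun p : (b : B) × Fin (k b) => (f ^ ((p.2 : ℕ))) (v p.1)) ∧
      Submodule.span ℂ
        (Set.range (fun p : (b : B) × Fin (k b) => (f ^ ((p.2 : ℕ))) (v p.1))) = ⊤ := by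
  refine ⟨PEmpty.{u+1}, inferInstance, fun _ => 1, fun b => b.elim,
    fun b => b.elim, fun b => b.elim, ?_, ?_⟩
  · haveI : IsEmpty ((b : PEmpty.{u+1}) × Fin 1) := ⟨fun p => p.1.elim⟩
    exact linearIndependent_empty_type
  · exact eq_top_iff.mpr fun x _ => by
      rw [Subsingleton.elim x 0]; exact zero_mem _

theorem exists_jordan_aux (N : ℕ) :
    ∀ (W : Type u) [AddCommGroup W] [Module ℂ W] [FiniteDimensional ℂ W]
      (f : Module.End ℂ W), IsNilpotent f → Module.finrank ℂ W ≤ N →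
    ∃ (B : Type u) (_ : Fintype B) (k : B → ℕ) (v : B → W),
      (∀ b, 0 < k b) ∧ (∀ b, (f ^ (k b)) (v b) = 0) ∧
      LinearIndependent ℂ (fun p : (b : B) × Fin (k b) => (f ^ ((p.2 : ℕ))) (v p.1)) ∧
      Submodule.span ℂ
        (Set.range (fun p : (b : B) × Fin (k b) => (f ^ ((p.2 : ℕ))) (v p.1))) = ⊤ := by
  induction N with
  | zero =>
    intro W _ _ _ f hf hrk
    have : Subsingleton W := by
      rw [← Module.finrank_zero_iff (R := ℂ)]; omega
    exact jordan_subsingleton this f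
  | succ N ih =>
    intro W _ _ _ f hf hrk
    by_cases hW : Subsingleton W
    · exact jordan_subsingleton hW f
    have hnt : Nontrivial W := not_subsingleton_iff_nontrivial.mp hW
    obtain ⟨m, hm⟩ := hf
    have hne : LinearMap.range f ≠ ⊤ := by
      intro htop
      have hs : Function.Surjective f := LinearMap.range_eq_top.mp htop
      have hsm : Function.Surjective (⇑(f ^ m)) := by
        rw [Module.End.coe_pow]; exact hs.iterate m
      obtain ⟨x, y, hxy⟩ := exists_pair_ne W
      obtain ⟨a, ha⟩ := hsm x
      obtain ⟨b, hb⟩ := hsm y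
      rw [hm] at ha hb
      simp only [LinearMap.zero_apply] at ha hb
      exact hxy (ha ▸ hb ▸ rfl)
    set W' := LinearMap.range f with hW'def
    have hmaps : ∀ x ∈ W', f x ∈ W' := fun x _ => LinearMap.mem_range_self f x
    set f' : Module.End ℂ W' := f.restrict hmaps with hf'def
    have hcoe : ∀ (i : ℕ) (x : W'), (((f' ^ i) x : W')) = (f ^ i) (x : W) := by
      intro i x
      rw [hf'def, Module.End.pow_restrict, LinearMap.restrict_coe_apply]
    have hnil' : IsNilpotent f' := by
      refine ⟨m, LinearMap.ext fun x => Subtype.ext ?_⟩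
      rw [hcoe, hm]
      simp
    have hrk' : finrank ℂ W' ≤ N := by
      have := Submodule.finrank_lt (K := ℂ) (V := W) hne
      omega
    obtain ⟨B', instB', k', v', hk'pos, hk'zero, hindep', hspan'⟩ := ih W' f' hnil' hrk'
    haveI := instB'
    classical
    have hlift : ∀ b, ∃ uu : W, f uu = (v' b : W) := fun b => (v' b).2
    choose u hu using hlift
    set oldc : ((b : B') × Fin (k' b)) → W := fun p => (f ^ ((p.2 : ℕ))) ((v' p.1 : W))
      with holdc
    have holdc_coe : ∀ p : (b : B') × Fin (k' b),
        oldc p = ((f' ^ ((p.2 : ℕ))) (v' p.1) : W) := fun p => (hcoe _ _).symm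
    have hindep_old : LinearIndependent ℂ oldc := by
      have h2 := hindep'.map' W'.subtype (Submodule.ker_subtype W')
      have : (W'.subtype ∘ fun p : (b : B') × Fin (k' b) => (f' ^ ((p.2 : ℕ))) (v' p.1))
          = oldc := by
        funext p; exact (holdc_coe p).symm
      rwa [this] at h2
    have hfu_pow : ∀ (b : B') (i : ℕ), (f ^ (i + 1)) (u b) = (f ^ i) ((v' b : W)) := by
      intro b i
      rw [pow_succ, Module.End.mul_apply, hu]
    have htopzero : ∀ b, (f ^ (k' b + 1)) (u b) = 0 := by
      intro b
      rw [hfu_pow, ← hcoe, hk'zero b]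
      simp
    set ends : B' → W := fun b => (f ^ (k' b)) (u b) with hends
    have hends_oldc : ∀ b, ends b
        = oldc ⟨b, ⟨k' b - 1, by have := hk'pos b; omega⟩⟩ := by
      intro b
      have h1 : k' b = (k' b - 1) + 1 := by have := hk'pos b; omega
      simp only [hends, holdc]
      conv_lhs => rw [h1]
      exact hfu_pow b (k' b - 1)
    have hends_indep : LinearIndependent ℂ ends := by
      have hinj : Function.Injective
          (fun b : B' => (⟨b, ⟨k' b - 1, by have := hk'pos b; omega⟩⟩ :
            (b : B') × Fin (k' b))) := by
        intro a b hab
        exact (Sigma.mk.inj_iff.mp hab).1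
      have := hindep_old.comp _ hinj
      have heq : (oldc ∘ fun b : B' =>
          (⟨b, ⟨k' b - 1, by have := hk'pos b; omega⟩⟩ : (b : B') × Fin (k' b))) = ends := by
        funext b; exact (hends_oldc b).symm
      rwa [heq] at this
    have hends_ker : ∀ b, ends b ∈ LinearMap.ker f := by
      intro b
      rw [LinearMap.mem_ker]
      have : f (ends b) = (f ^ (k' b + 1)) (u b) := by
        rw [pow_succ', Module.End.mul_apply]
      rw [this, htopzero]
    have hsub1 : Set.range ends ⊆ (LinearMap.ker f : Set W) := by
      rintro _ ⟨b, rfl⟩; exact hends_ker b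
    obtain ⟨bs, hbs_ker, hsbs, hker_span, hbs_indep0⟩ :=
      exists_linearIndepOn_id_extension
        ((linearIndepOn_id_range_iff hends_indep.injective).mpr hends_indep) hsub1
    have hbs_indep : LinearIndependent ℂ (fun x : bs => (x : W)) := hbs_indep0
    have hbs_fin : bs.Finite := hbs_indep.setFinite
    set ext0 : Set W := bs \ Set.range ends with hext0
    haveI : Fintype ext0 := (hbs_fin.subset Set.diff_subset).fintype
    set kk : B' ⊕ ext0 → ℕ := Sum.elim (fun b => k' b + 1) (fun _ => 1) with hkk
    set vv : B' ⊕ ext0 → W := Sum.elim u (fun c => (c : W)) with hvv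
    set newfam : ((s : B' ⊕ ext0) × Fin (kk s)) → W := fun p => (f ^ ((p.2 : ℕ))) (vv p.1)
      with hnewfam
    have hrange : ∀ (b : B') (i : ℕ) (hi : i < k' b + 1),
        (f ^ i) (u b) ∈ Set.range newfam := fun b i hi => ⟨⟨Sum.inl b, ⟨i, hi⟩⟩, rfl⟩
    have hW'span : W' = span ℂ (Set.range oldc) := by
      have h1 : Submodule.map W'.subtype (span ℂ (Set.range
          (fun p : (b : B') × Fin (k' b) => (f' ^ ((p.2 : ℕ))) (v' p.1)))) = W' := by
        rw [hspan', Submodule.map_subtype_top]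
      rw [← h1, Submodule.map_span, ← Set.range_comp]
      exact congrArg _ (congrArg Set.range (funext fun p => (holdc_coe p).symm))
    have hW'le : W' ≤ Submodule.map f (span ℂ (Set.range newfam)) := by
      rw [hW'span, Submodule.span_le]
      rintro _ ⟨⟨b, i⟩, rfl⟩
      refine Submodule.mem_map.mpr ⟨(f ^ ((i : ℕ))) (u b),
        Submodule.subset_span (hrange b i (by have := i.isLt; omega)), ?_⟩
      show f ((f ^ ((i : ℕ))) (u b)) = oldc ⟨b, i⟩
      rw [← Module.End.mul_apply, ← pow_succ', hfu_pow]
    have hbs_range : bs ⊆ Set.range newfam := by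
      intro z hz
      by_cases hzr : z ∈ Set.range ends
      · obtain ⟨b, rfl⟩ := hzr
        exact ⟨⟨Sum.inl b, ⟨k' b, by simp only [hkk, Sum.elim_inl]; omega⟩⟩, rfl⟩
      · refine ⟨⟨Sum.inr ⟨z, hz, hzr⟩, ⟨0, Nat.one_pos⟩⟩, ?_⟩
        show (f ^ (0 : ℕ)) ((⟨z, hz, hzr⟩ : ext0) : W) = z
        rw [pow_zero, Module.End.one_apply]
    have hker_le : LinearMap.ker f ≤ span ℂ (Set.range newfam) := by
      intro z hz
      exact Submodule.span_mono hbs_range (hker_span hz)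
    have hspan_new : span ℂ (Set.range newfam) = ⊤ := by
      rw [eq_top_iff]
      intro w _
      obtain ⟨s₀, hs₀, hfs⟩ := hW'le (LinearMap.mem_range_self f w)
      have hker : w - s₀ ∈ LinearMap.ker f := by
        rw [LinearMap.mem_ker, map_sub, hfs, sub_self]
      have hw : w = (w - s₀) + s₀ := (sub_add_cancel w s₀).symm
      rw [hw]
      exact add_mem (hker_le hker) hs₀
    have key1 : ∀ coef : ((s : B' ⊕ ext0) × Fin (kk s)) → ℂ,
        (∑ p, coef p • newfam p)
        = (∑ a : (a : B') × Fin (k' a + 1),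
            coef ⟨Sum.inl a.1, a.2⟩ • (f ^ ((a.2 : ℕ))) (u a.1))
          + (∑ c : ext0, coef ⟨Sum.inr c, ⟨0, Nat.one_pos⟩⟩ • (c : W)) := by
      intro coef
      rw [← Equiv.sum_comp (sigmaSumEquiv (fun s => Fin (kk s)))
        (fun p => coef p • newfam p), Fintype.sum_sum_type]
      refine congrArg₂ (· + ·) rfl ?_
      rw [← Finset.univ_sigma_univ, Finset.sum_sigma]
      refine Finset.sum_congr rfl fun c _ => ?_
      show (∑ i : Fin 1, coef ⟨Sum.inr c, i⟩ • (f ^ ((i : ℕ))) ((c : W)))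
        = coef ⟨Sum.inr c, ⟨0, Nat.one_pos⟩⟩ • ((c : W))
      rw [Fin.sum_univ_one]
      show coef ⟨Sum.inr c, (0 : Fin 1)⟩ • (f ^ (((0 : Fin 1) : ℕ))) ((c : W)) = _
      rw [Fin.val_zero, pow_zero, Module.End.one_apply]
      rfl
    have hindep_new : LinearIndependent ℂ newfam := by
      rw [Fintype.linearIndependent_iff]
      intro g hg
      have hg1 : (∑ a : (a : B') × Fin (k' a + 1),
            g ⟨Sum.inl a.1, a.2⟩ • (f ^ ((a.2 : ℕ))) (u a.1))
          + (∑ c : ext0, g ⟨Sum.inr c, ⟨0, Nat.one_pos⟩⟩ • (c : W)) = 0 :=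
        (key1 g).symm.trans hg
      have h3 : ∀ a : (a : B') × Fin (k' a + 1),
          f (g ⟨Sum.inl a.1, a.2⟩ • (f ^ ((a.2 : ℕ))) (u a.1))
          = g ⟨Sum.inl a.1, a.2⟩ • (f ^ ((a.2 : ℕ) + 1)) (u a.1) := fun a => by
        rw [map_smul, ← Module.End.mul_apply, ← pow_succ']
      have h2 : (∑ c : ext0, f (g ⟨Sum.inr c, ⟨0, Nat.one_pos⟩⟩ • (c : W))) = 0 :=
        Finset.sum_eq_zero fun c _ => by
          rw [map_smul, LinearMap.mem_ker.mp (hbs_ker c.2.1), smul_zero]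
      have hgf : (∑ a : (a : B') × Fin (k' a + 1),
          g ⟨Sum.inl a.1, a.2⟩ • (f ^ ((a.2 : ℕ) + 1)) (u a.1)) = 0 := by
        have h0 := congrArg f hg1
        rw [map_add, map_zero, map_sum, map_sum,
          Finset.sum_congr rfl (fun a _ => h3 a), h2, add_zero] at h0
        exact h0
      have hsplit : ∀ F : ((a : B') × Fin (k' a + 1)) → W,
          (∑ a : (a : B') × Fin (k' a + 1), F a)
          = ∑ b : B', ((∑ i : Fin (k' b), F ⟨b, i.castSucc⟩) + F ⟨b, Fin.last _⟩) := by
        intro F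
        rw [← Finset.univ_sigma_univ, Finset.sum_sigma]
        exact Finset.sum_congr rfl fun b _ => by rw [Fin.sum_univ_castSucc]
      have hgf2 : (∑ p : (b : B') × Fin (k' b),
          g ⟨Sum.inl p.1, (p.2).castSucc⟩ • oldc p) = 0 := by
        rw [hsplit] at hgf
        have hper : ∀ b : B',
            ((∑ i : Fin (k' b),
              g ⟨Sum.inl b, i.castSucc⟩ • (f ^ (((i.castSucc : Fin (k' b + 1)) : ℕ) + 1)) (u b))
              + g ⟨Sum.inl b, Fin.last _⟩ • (f ^ (((Fin.last (k' b)) : ℕ) + 1)) (u b))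
            = ∑ i : Fin (k' b), g ⟨Sum.inl b, i.castSucc⟩ • oldc ⟨b, i⟩ := fun b => by
          simp only [Fin.coe_castSucc, Fin.val_last]
          rw [htopzero b, smul_zero, add_zero]
          exact Finset.sum_congr rfl fun i _ => by rw [hfu_pow]
        rw [Finset.sum_congr rfl (fun b _ => hper b)] at hgf
        rw [← Finset.univ_sigma_univ, Finset.sum_sigma]
        exact hgf
      have hz1 : ∀ p : (b : B') × Fin (k' b), g ⟨Sum.inl p.1, (p.2).castSucc⟩ = 0 :=
        Fintype.linearIndependent_iff.mp hindep_old _ hgf2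
      have hS1 : (∑ a : (a : B') × Fin (k' a + 1),
            g ⟨Sum.inl a.1, a.2⟩ • (f ^ ((a.2 : ℕ))) (u a.1))
          = ∑ b : B', g ⟨Sum.inl b, Fin.last _⟩ • ends b := by
        rw [hsplit]
        refine Finset.sum_congr rfl fun b _ => ?_
        rw [Finset.sum_eq_zero fun i _ => by rw [hz1 ⟨b, i⟩, zero_smul], zero_add]
        rfl
      have hg3 : (∑ b : B', g ⟨Sum.inl b, Fin.last _⟩ • ends b)
          + (∑ c : ext0, g ⟨Sum.inr c, ⟨0, Nat.one_pos⟩⟩ • (c : W)) = 0 := by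
        rw [← hS1]; exact hg1
      have hGmem : ∀ s : B' ⊕ ext0, Sum.elim ends (fun c : ext0 => (c : W)) s ∈ bs := by
        rintro (b | c)
        · exact hsbs ⟨b, rfl⟩
        · exact c.2.1
      have hGindep : LinearIndependent ℂ (Sum.elim ends (fun c : ext0 => (c : W))) := by
        have hinj : Function.Injective
            (fun s : B' ⊕ ext0 => (⟨Sum.elim ends (fun c : ext0 => (c : W)) s, hGmem s⟩ : bs)) := by
          rintro (a | a) (b | b) hab <;>
            simp only [Subtype.mk.injEq, Sum.elim_inl, Sum.elim_inr] at hab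
          · exact congrArg Sum.inl (hends_indep.injective hab)
          · exact absurd (hab ▸ ⟨a, rfl⟩ : (b : W) ∈ Set.range ends) b.2.2
          · exact absurd (⟨b, hab.symm⟩ : (a : W) ∈ Set.range ends) a.2.2
          · exact congrArg Sum.inr (Subtype.ext hab)
        exact hbs_indep.comp _ hinj
      have hz2 : ∀ s : B' ⊕ ext0,
          Sum.elim (fun b => g ⟨Sum.inl b, Fin.last _⟩)
            (fun c => g ⟨Sum.inr c, ⟨0, Nat.one_pos⟩⟩) s = 0 := by
        apply Fintype.linearIndependent_iff.mp hGindep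
        rw [Fintype.sum_sum_type]
        simpa using hg3
      intro p
      obtain ⟨q, rfl⟩ := (sigmaSumEquiv (fun s => Fin (kk s))).surjective p
      rcases q with ⟨b, i⟩ | ⟨c, i⟩
      · induction i using Fin.lastCases with
        | last => exact hz2 (Sum.inl b)
        | cast i => exact hz1 ⟨b, i⟩
      · have hi : i = ⟨0, Nat.one_pos⟩ := by
          have h0 : (i : ℕ) < 1 := i.isLt
          refine Fin.ext ?_
          show (i : ℕ) = 0
          omega
        rw [hi]
        exact hz2 (Sum.inr c)
    exact ⟨B' ⊕ ext0, inferInstance, kk, vv, by rintro (b | c) <;> simp [hkk],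
      by
        rintro (b | c)
        · exact htopzero b
        · show (f ^ 1) ((c : W)) = 0
          rw [pow_one]
          exact LinearMap.mem_ker.mp (hbs_ker c.2.1),
      hindep_new, hspan_new⟩


section Entries

variable {V : Type u} [AddCommGroup V] [Module ℂ V] {B : Type v} [Fintype B] {k : B → ℕ}
variable (bI : Basis ((b : B) × Fin (k b)) ℂ V)

lemma lamOf_mk (b : B) (i : ℕ) (hi : i < k b) :
    lamOf k ⟨b, ⟨i, hi⟩⟩ = 2 * (i : ℤ) - (k b : ℤ) + 1 + epsk (k b) := rfl

lemma repr_apply_sum (g : Module.End ℂ V) (w : V) (p : (b : B) × Fin (k b)) :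
    bI.repr (g w) p = ∑ q, bI.repr w q * bI.repr (g (bI q)) p := by
  classical
  conv_lhs => rw [← bI.sum_repr w]
  rw [map_sum, map_sum, Finsupp.finset_sum_apply]
  exact Finset.sum_congr rfl fun q _ => by
    rw [map_smul, map_smul, Finsupp.smul_apply, smul_eq_mul]

variable (e : Module.End ℂ V)
variable (he : ∀ (c : B) (j : ℕ) (hj : j < k c),
    e (bI ⟨c, ⟨j, hj⟩⟩) = if hj2 : j + 1 < k c then bI ⟨c, ⟨j + 1, hj2⟩⟩ else 0)

include he

lemma repr_e_zero (w : V) (b : B) (h0 : 0 < k b) :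
    bI.repr (e w) ⟨b, ⟨0, h0⟩⟩ = 0 := by
  classical
  rw [repr_apply_sum bI e w]
  refine Finset.sum_eq_zero fun q _ => ?_
  rcases q with ⟨c, ⟨j, hj⟩⟩
  rw [he c j hj]
  by_cases hj2 : j + 1 < k c
  · rw [dif_pos hj2, Basis.repr_self, Finsupp.single_apply, if_neg, mul_zero]
    intro hcontra
    obtain ⟨rfl, h2⟩ := Sigma.mk.inj_iff.mp hcontra
    have h3 := congrArg Fin.val (eq_of_heq h2)
    simp only [Fin.val_mk] at h3
    omega
  · rw [dif_neg hj2, map_zero, Finsupp.zero_apply, mul_zero]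

lemma repr_e_succ (w : V) (b : B) (i : ℕ) (hi : i + 1 < k b) :
    bI.repr (e w) ⟨b, ⟨i + 1, hi⟩⟩ = bI.repr w ⟨b, ⟨i, Nat.lt_of_succ_lt hi⟩⟩ := by
  classical
  rw [repr_apply_sum bI e w]
  rw [Finset.sum_eq_single (⟨b, ⟨i, Nat.lt_of_succ_lt hi⟩⟩ : (b : B) × Fin (k b))]
  · rw [he b i (Nat.lt_of_succ_lt hi), dif_pos hi, Basis.repr_self,
      Finsupp.single_apply, if_pos rfl, mul_one]
  · rintro ⟨c, ⟨j, hj⟩⟩ _ hqne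
    rw [he c j hj]
    by_cases hj2 : j + 1 < k c
    · rw [dif_pos hj2, Basis.repr_self, Finsupp.single_apply, if_neg, mul_zero]
      intro hcontra
      obtain ⟨rfl, h2⟩ := Sigma.mk.inj_iff.mp hcontra
      have h3 := congrArg Fin.val (eq_of_heq h2)
      simp only [Fin.val_mk] at h3
      exact hqne (congrArg (Sigma.mk c) (Fin.ext (by simp only [Fin.val_mk]; omega)))
    · rw [dif_neg hj2, map_zero, Finsupp.zero_apply, mul_zero]
  · intro habs
    exact absurd (Finset.mem_univ _) habs

omit he

lemma entry_ext (x y : Module.End ℂ V)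
    (H : ∀ p q, bI.repr (x (bI q)) p = bI.repr (y (bI q)) p) : x = y := by
  refine Basis.ext bI fun q => ?_
  apply bI.repr.injective
  exact DFunLike.ext _ _ fun p => H p q

variable (h : Module.End ℂ V)
variable (hh : ∀ p, h (bI p) = ((lamOf k p : ℤ) : ℂ) • bI p)

include hh

lemma repr_h (w : V) (p : (b : B) × Fin (k b)) :
    bI.repr (h w) p = ((lamOf k p : ℤ) : ℂ) * bI.repr w p := by
  classical
  rw [repr_apply_sum bI h w]
  rw [Finset.sum_eq_single p]
  · rw [hh, map_smul, Finsupp.smul_apply, Basis.repr_self, Finsupp.single_apply,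
      if_pos rfl, smul_eq_mul, mul_one, mul_comm]
  · intro q _ hqne
    rw [hh, map_smul, Finsupp.smul_apply, Basis.repr_self, Finsupp.single_apply,
      if_neg hqne, smul_zero, mul_zero]
  · intro habs
    exact absurd (Finset.mem_univ _) habs

lemma repr_lie_h (x : Module.End ℂ V) (p q : (b : B) × Fin (k b)) :
    bI.repr (⁅h, x⁆ (bI q)) p
      = (((lamOf k p - lamOf k q : ℤ)) : ℂ) * bI.repr (x (bI q)) p := by
  have h1 : ⁅h, x⁆ (bI q) = h (x (bI q)) - x (h (bI q)) := by
    rw [Ring.lie_def]; rfl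
  rw [h1, map_sub, Finsupp.sub_apply, repr_h bI h hh (x (bI q)) p, hh q, map_smul,
    map_smul, Finsupp.smul_apply, smul_eq_mul]
  push_cast
  ring

lemma mem_gradedPiece_iff (x : Module.End ℂ V) (d : ℤ) :
    x ∈ gradedPiece h d
      ↔ ∀ p q, lamOf k p - lamOf k q ≠ d → bI.repr (x (bI q)) p = 0 := by
  have hsm : ∀ p q, bI.repr (((d : ℂ) • x) (bI q)) p = (d : ℂ) * bI.repr (x (bI q)) p := by
    intro p q
    rw [LinearMap.smul_apply, map_smul, Finsupp.smul_apply, smul_eq_mul]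
  constructor
  · intro hx p q hne
    have hx' : ⁅h, x⁆ = (d : ℂ) • x := hx
    have h1 := congrArg (fun z : Module.End ℂ V => bI.repr (z (bI q)) p) hx'
    beta_reduce at h1
    rw [repr_lie_h bI h hh, hsm] at h1
    have h3 : (((lamOf k p - lamOf k q : ℤ)) : ℂ) - (d : ℂ) ≠ 0 := by
      rw [sub_ne_zero]
      exact fun hc => hne (by exact_mod_cast hc)
    have h4 : ((((lamOf k p - lamOf k q : ℤ)) : ℂ) - (d : ℂ)) * bI.repr (x (bI q)) p = 0 := by
      rw [sub_mul, h1, sub_self]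
    rcases mul_eq_zero.mp h4 with h5 | h5
    · exact absurd h5 h3
    · exact h5
  · intro hsupp
    show ⁅h, x⁆ = (d : ℂ) • x
    refine entry_ext bI _ _ fun p q => ?_
    rw [repr_lie_h bI h hh, hsm]
    by_cases hne : lamOf k p - lamOf k q = d
    · rw [hne]
    · rw [hsupp p q hne, mul_zero, mul_zero]

omit hh
include he

lemma repr_lie_e_zero (x : Module.End ℂ V) (b c : B) (h0 : 0 < k b) (j : ℕ) (hj : j < k c) :
    bI.repr (⁅e, x⁆ (bI ⟨c, ⟨j, hj⟩⟩)) ⟨b, ⟨0, h0⟩⟩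
      = - (if hj2 : j + 1 < k c
          then bI.repr (x (bI ⟨c, ⟨j + 1, hj2⟩⟩)) ⟨b, ⟨0, h0⟩⟩ else 0) := by
  have h1 : ⁅e, x⁆ (bI ⟨c, ⟨j, hj⟩⟩) = e (x (bI ⟨c, ⟨j, hj⟩⟩)) - x (e (bI ⟨c, ⟨j, hj⟩⟩)) := by
    rw [Ring.lie_def]; rfl
  rw [h1, map_sub, Finsupp.sub_apply, repr_e_zero bI e he, he c j hj]
  by_cases hj2 : j + 1 < k c
  · rw [dif_pos hj2, dif_pos hj2, zero_sub]
  · rw [dif_neg hj2, dif_neg hj2, map_zero, map_zero, Finsupp.zero_apply, zero_sub, neg_zero]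

lemma repr_lie_e_succ (x : Module.End ℂ V) (b c : B) (i : ℕ) (hi : i + 1 < k b)
    (j : ℕ) (hj : j < k c) :
    bI.repr (⁅e, x⁆ (bI ⟨c, ⟨j, hj⟩⟩)) ⟨b, ⟨i + 1, hi⟩⟩
      = bI.repr (x (bI ⟨c, ⟨j, hj⟩⟩)) ⟨b, ⟨i, Nat.lt_of_succ_lt hi⟩⟩
        - (if hj2 : j + 1 < k c
          then bI.repr (x (bI ⟨c, ⟨j + 1, hj2⟩⟩)) ⟨b, ⟨i + 1, hi⟩⟩ else 0) := by
  have h1 : ⁅e, x⁆ (bI ⟨c, ⟨j, hj⟩⟩) = e (x (bI ⟨c, ⟨j, hj⟩⟩)) - x (e (bI ⟨c, ⟨j, hj⟩⟩)) := by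
    rw [Ring.lie_def]; rfl
  rw [h1, map_sub, Finsupp.sub_apply, repr_e_succ bI e he, he c j hj]
  by_cases hj2 : j + 1 < k c
  · rw [dif_pos hj2, dif_pos hj2]
  · rw [dif_neg hj2, dif_neg hj2, map_zero, map_zero, Finsupp.zero_apply]

lemma ker_entry_lt (x : Module.End ℂ V) (hx : ⁅e, x⁆ = 0) :
    ∀ (i : ℕ) (b c : B) (j : ℕ) (hi : i < k b) (hj : j < k c), i < j →
      bI.repr (x (bI ⟨c, ⟨j, hj⟩⟩)) ⟨b, ⟨i, hi⟩⟩ = 0 := by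
  intro i
  induction i with
  | zero =>
    intro b c j hi hj hij
    obtain ⟨j', rfl⟩ : ∃ j', j = j' + 1 := ⟨j - 1, by omega⟩
    have h0 := repr_lie_e_zero bI e he x b c hi j' (by omega)
    rw [hx] at h0
    simp only [LinearMap.zero_apply, map_zero, Finsupp.zero_apply] at h0
    rw [dif_pos hj] at h0
    exact neg_eq_zero.mp h0.symm
  | succ i ih =>
    intro b c j hi hj hij
    obtain ⟨j', rfl⟩ : ∃ j', j = j' + 1 := ⟨j - 1, by omega⟩
    have h0 := repr_lie_e_succ bI e he x b c i hi j' (by omega)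
    rw [hx] at h0
    simp only [LinearMap.zero_apply, map_zero, Finsupp.zero_apply] at h0
    rw [dif_pos hj] at h0
    have h1 := ih b c j' (Nat.lt_of_succ_lt hi) (by omega) (by omega)
    rw [h1, zero_sub] at h0
    exact neg_eq_zero.mp h0.symm

lemma ker_entry_ge_aux (x : Module.End ℂ V) (hx : ⁅e, x⁆ = 0) :
    ∀ (s : ℕ) (b c : B) (i j : ℕ) (hi : i < k b) (hj : j < k c), k c = j + s + 1 →
      (i : ℤ) + (k c : ℤ) < (k b : ℤ) + (j : ℤ) →
      bI.repr (x (bI ⟨c, ⟨j, hj⟩⟩)) ⟨b, ⟨i, hi⟩⟩ = 0 := by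
  intro s
  induction s with
  | zero =>
    intro b c i j hi hj hs hlt
    have hi1 : i + 1 < k b := by omega
    have h0 := repr_lie_e_succ bI e he x b c i hi1 j hj
    rw [hx] at h0
    simp only [LinearMap.zero_apply, map_zero, Finsupp.zero_apply] at h0
    rw [dif_neg (by omega), sub_zero] at h0
    exact h0.symm
  | succ s ih =>
    intro b c i j hi hj hs hlt
    have hi1 : i + 1 < k b := by omega
    have hj1 : j + 1 < k c := by omega
    have h0 := repr_lie_e_succ bI e he x b c i hi1 j hj
    rw [hx] at h0
    simp only [LinearMap.zero_apply, map_zero, Finsupp.zero_apply] at h0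
    rw [dif_pos hj1] at h0
    have h1 := ih b c (i + 1) (j + 1) hi1 hj1 (by omega) (by omega)
    rw [h1, sub_zero] at h0
    exact h0.symm


lemma entry_zero_of_ker (x : Module.End ℂ V) (hx : ⁅e, x⁆ = 0) (d : ℤ) (hd : d ≤ -1)
    (hsupp : ∀ p q, lamOf k p - lamOf k q ≠ d → bI.repr (x (bI q)) p = 0) :
    ∀ p q, bI.repr (x (bI q)) p = 0 := by
  rintro ⟨b, ⟨i, hi⟩⟩ ⟨c, ⟨j, hj⟩⟩
  by_cases hpq : lamOf k ⟨b, ⟨i, hi⟩⟩ - lamOf k ⟨c, ⟨j, hj⟩⟩ = d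
  · obtain ⟨r1, hr1⟩ := lamOf_even k ⟨b, ⟨i, hi⟩⟩
    obtain ⟨r2, hr2⟩ := lamOf_even k ⟨c, ⟨j, hj⟩⟩
    have hd2 : d ≤ -2 := by omega
    rw [lamOf_mk, lamOf_mk] at hpq
    have hεb1 := epsk_nonneg (k b); have hεb2 := epsk_le_one (k b)
    have hεc1 := epsk_nonneg (k c); have hεc2 := epsk_le_one (k c)
    by_cases hij : i < j
    · exact ker_entry_lt bI e he x hx i b c j hi hj hij
    · exact ker_entry_ge_aux bI e he x hx (k c - 1 - j) b c i j hi hj (by omega) (by omega)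
  · exact hsupp _ _ hpq

lemma surj_core (d : ℤ) (hd : 1 ≤ d) (y : Module.End ℂ V)
    (hy : ∀ p q, lamOf k p - lamOf k q ≠ d → bI.repr (y (bI q)) p = 0) :
    ∃ x : Module.End ℂ V,
      (∀ p q, lamOf k p - lamOf k q ≠ d - 2 → bI.repr (x (bI q)) p = 0) ∧ ⁅e, x⁆ = y := by
  classical
  set ent : B → ℕ → B → ℕ → ℂ := fun b i c j =>
    if h : i < k b ∧ j < k c then bI.repr (y (bI ⟨c, ⟨j, h.2⟩⟩)) ⟨b, ⟨i, h.1⟩⟩ else 0 with hent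
  have hentv : ∀ (b c : B) (i j : ℕ) (hi : i < k b) (hj : j < k c),
      ent b i c j = bI.repr (y (bI ⟨c, ⟨j, hj⟩⟩)) ⟨b, ⟨i, hi⟩⟩ := by
    intro b c i j hi hj
    simp only [hent]
    rw [dif_pos ⟨hi, hj⟩]
  have hent0 : ∀ b c i j, k c ≤ j → ent b i c j = 0 := by
    intro b c i j hle
    simp only [hent]
    exact dif_neg (by omega)
  set S : B → B → ℕ → ℕ → ℂ := fun b c i j =>
    ∑ r ∈ Finset.range (k c + 1), ent b (i + r) c (j + r) with hS
  have hS1 : ∀ b c i j, S b c i j = ent b i c j + S b c (i + 1) (j + 1) := by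
    intro b c i j
    simp only [hS]
    rw [Finset.sum_range_succ']
    calc (∑ r ∈ Finset.range (k c), ent b (i + (r + 1)) c (j + (r + 1)))
          + ent b (i + 0) c (j + 0)
        = ent b i c j + ∑ r ∈ Finset.range (k c), ent b (i + 1 + r) c (j + 1 + r) := by
          rw [Nat.add_zero, Nat.add_zero, add_comm]
          congr 1
          exact Finset.sum_congr rfl fun r _ => by
            rw [show i + (r + 1) = i + 1 + r by omega, show j + (r + 1) = j + 1 + r by omega]
      _ = ent b i c j + ((∑ r ∈ Finset.range (k c), ent b (i + 1 + r) c (j + 1 + r))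
            + ent b (i + 1 + k c) c (j + 1 + k c)) := by
          rw [hent0 b c (i + 1 + k c) (j + 1 + k c) (by omega), add_zero]
      _ = ent b i c j + ∑ r ∈ Finset.range (k c + 1), ent b (i + 1 + r) c (j + 1 + r) := by
          rw [Finset.sum_range_succ]
  have hS0 : ∀ b c i j, k c ≤ j → S b c i j = 0 := by
    intro b c i j hle
    simp only [hS]
    exact Finset.sum_eq_zero fun r _ => hent0 _ _ _ _ (by omega)
  set T : B → B → ℕ → ℕ → ℂ := fun b c i j =>
    ∑ r ∈ Finset.range (i + 1), ent b (i - r) c (j - r) with hT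
  have hT1 : ∀ b c i j, T b c (i + 1) (j + 1) = T b c i j + ent b (i + 1) c (j + 1) := by
    intro b c i j
    simp only [hT]
    rw [Finset.sum_range_succ']
    congr 1
    exact Finset.sum_congr rfl fun r _ => by rw [Nat.succ_sub_succ, Nat.succ_sub_succ]
  set A : ((b : B) × Fin (k b)) → ((b : B) × Fin (k b)) → ℂ := fun p q =>
    if lamOf k p - lamOf k q = d - 2 then
      (if (q.2 : ℕ) ≤ (p.2 : ℕ) then S p.1 q.1 ((p.2 : ℕ) + 1) ((q.2 : ℕ))
       else - T p.1 q.1 ((p.2 : ℕ)) ((q.2 : ℕ) - 1))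
    else 0 with hA
  have hAv : ∀ (b : B) (i : ℕ) (hi : i < k b) (c : B) (j : ℕ) (hj : j < k c),
      A ⟨b, ⟨i, hi⟩⟩ ⟨c, ⟨j, hj⟩⟩
        = if lamOf k ⟨b, ⟨i, hi⟩⟩ - lamOf k ⟨c, ⟨j, hj⟩⟩ = d - 2 then
            (if j ≤ i then S b c (i + 1) j else - T b c i (j - 1))
          else 0 := fun _ _ _ _ _ _ => rfl
  have hAvS : ∀ (b : B) (i : ℕ) (hi : i < k b) (c : B) (j : ℕ) (hj : j < k c),
      j ≤ i → lamOf k ⟨b, ⟨i, hi⟩⟩ - lamOf k ⟨c, ⟨j, hj⟩⟩ = d - 2 →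
      A ⟨b, ⟨i, hi⟩⟩ ⟨c, ⟨j, hj⟩⟩ = S b c (i + 1) j := by
    intro b i hi c j hj h1 h2
    rw [hAv, if_pos h2, if_pos h1]
  have hAvT : ∀ (b : B) (i : ℕ) (hi : i < k b) (c : B) (j : ℕ) (hj : j < k c),
      ¬ j ≤ i → lamOf k ⟨b, ⟨i, hi⟩⟩ - lamOf k ⟨c, ⟨j, hj⟩⟩ = d - 2 →
      A ⟨b, ⟨i, hi⟩⟩ ⟨c, ⟨j, hj⟩⟩ = - T b c i (j - 1) := by
    intro b i hi c j hj h1 h2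
    rw [hAv, if_pos h2, if_neg h1]
  have hAv0 : ∀ (b : B) (i : ℕ) (hi : i < k b) (c : B) (j : ℕ) (hj : j < k c),
      lamOf k ⟨b, ⟨i, hi⟩⟩ - lamOf k ⟨c, ⟨j, hj⟩⟩ ≠ d - 2 →
      A ⟨b, ⟨i, hi⟩⟩ ⟨c, ⟨j, hj⟩⟩ = 0 := by
    intro b i hi c j hj h1
    rw [hAv, if_neg h1]
  set x : Module.End ℂ V := bI.constr ℂ (fun q => ∑ p, A p q • bI p) with hx
  have hxe : ∀ p q, bI.repr (x (bI q)) p = A p q := by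
    intro p q
    rw [hx, Basis.constr_basis, map_sum, Finsupp.finset_sum_apply,
      Finset.sum_eq_single p]
    · rw [map_smul, Finsupp.smul_apply, Basis.repr_self, Finsupp.single_apply,
        if_pos rfl, smul_eq_mul, mul_one]
    · intro q' _ hne
      rw [map_smul, Finsupp.smul_apply, Basis.repr_self, Finsupp.single_apply,
        if_neg hne, smul_zero]
    · intro habs
      exact absurd (Finset.mem_univ _) habs
  refine ⟨x, ?_, ?_⟩
  · intro p q hne
    rw [hxe]
    rcases p with ⟨b, ⟨i, hi⟩⟩
    rcases q with ⟨c, ⟨j, hj⟩⟩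
    exact hAv0 b i hi c j hj hne
  · refine entry_ext bI _ _ fun p q => ?_
    rcases p with ⟨b, ⟨i1, hi1⟩⟩
    rcases q with ⟨c, ⟨j1, hj1⟩⟩
    by_cases hgd : lamOf k ⟨b, ⟨i1, hi1⟩⟩ - lamOf k ⟨c, ⟨j1, hj1⟩⟩ = d
    · -- on the diagonal of degree `d`
      obtain ⟨r1, hr1⟩ := lamOf_even k ⟨b, ⟨i1, hi1⟩⟩
      obtain ⟨r2, hr2⟩ := lamOf_even k ⟨c, ⟨j1, hj1⟩⟩
      rw [lamOf_mk] at hr1 hr2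
      rw [lamOf_mk, lamOf_mk] at hgd
      have hεb1 := epsk_nonneg (k b); have hεb2 := epsk_le_one (k b)
      have hεc1 := epsk_nonneg (k c); have hεc2 := epsk_le_one (k c)
      have hd2 : 2 ≤ d := by omega
      rcases Nat.lt_or_ge j1 i1 with hij | hij
      · -- strictly lower diagonal: use the `S` formula
        obtain ⟨i, rfl⟩ : ∃ i, i1 = i + 1 := ⟨i1 - 1, by omega⟩
        rw [repr_lie_e_succ bI e he x b c i hi1 j1 hj1]
        simp only [hxe]
        have hg1 : A ⟨b, ⟨i, Nat.lt_of_succ_lt hi1⟩⟩ ⟨c, ⟨j1, hj1⟩⟩ = S b c (i + 1) j1 :=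
          hAvS b i _ c j1 _ (by omega) (by rw [lamOf_mk, lamOf_mk]; omega)
        by_cases hj2 : j1 + 1 < k c
        · have hg2 : A ⟨b, ⟨i + 1, hi1⟩⟩ ⟨c, ⟨j1 + 1, hj2⟩⟩ = S b c (i + 1 + 1) (j1 + 1) :=
            hAvS b (i + 1) _ c (j1 + 1) _ (by omega) (by rw [lamOf_mk, lamOf_mk]; omega)
          rw [dif_pos hj2, hg1, hg2, hS1 b c (i + 1) j1, hentv b c (i + 1) j1 hi1 hj1]
          ring
        · rw [dif_neg hj2, sub_zero, hg1, hS1 b c (i + 1) j1,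
            hS0 b c (i + 1 + 1) (j1 + 1) (by omega), add_zero]
          exact hentv b c (i + 1) j1 hi1 hj1
      · -- weakly upper diagonal: use the `T` formula
        have hkey : (k b : ℤ) + (j1 : ℤ) + 1 ≤ (i1 : ℤ) + (k c : ℤ) := by omega
        have hj2 : j1 + 1 < k c := by omega
        rcases Nat.eq_zero_or_pos i1 with rfl | hpos
        · rw [repr_lie_e_zero bI e he x b c hi1 j1 hj1]
          simp only [hxe]
          have hg2 : A ⟨b, ⟨0, hi1⟩⟩ ⟨c, ⟨j1 + 1, hj2⟩⟩ = - T b c 0 (j1 + 1 - 1) :=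
            hAvT b 0 _ c (j1 + 1) _ (by omega) (by rw [lamOf_mk, lamOf_mk]; omega)
          rw [dif_pos hj2, hg2, Nat.add_sub_cancel, neg_neg]
          simp only [hT]
          rw [Finset.sum_range_one, Nat.sub_zero, Nat.sub_zero]
          exact hentv b c 0 j1 hi1 hj1
        · obtain ⟨i, rfl⟩ : ∃ i, i1 = i + 1 := ⟨i1 - 1, by omega⟩
          rw [repr_lie_e_succ bI e he x b c i hi1 j1 hj1]
          simp only [hxe]
          have hg1 : A ⟨b, ⟨i, Nat.lt_of_succ_lt hi1⟩⟩ ⟨c, ⟨j1, hj1⟩⟩ = - T b c i (j1 - 1) :=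
            hAvT b i _ c j1 _ (by omega) (by rw [lamOf_mk, lamOf_mk]; omega)
          have hg2 : A ⟨b, ⟨i + 1, hi1⟩⟩ ⟨c, ⟨j1 + 1, hj2⟩⟩ = - T b c (i + 1) (j1 + 1 - 1) :=
            hAvT b (i + 1) _ c (j1 + 1) _ (by omega) (by rw [lamOf_mk, lamOf_mk]; omega)
          rw [dif_pos hj2, hg1, hg2, Nat.add_sub_cancel]
          have hj1' : j1 - 1 + 1 = j1 := by omega
          have hTT := hT1 b c i (j1 - 1)
          rw [hj1'] at hTT
          rw [hTT, hentv b c (i + 1) j1 hi1 hj1]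
          ring
    · -- off the diagonal of degree `d`: both sides vanish
      rw [hy _ _ hgd]
      rw [lamOf_mk, lamOf_mk] at hgd
      rcases Nat.eq_zero_or_pos i1 with rfl | hpos
      · rw [repr_lie_e_zero bI e he x b c hi1 j1 hj1]
        simp only [hxe]
        by_cases hj2 : j1 + 1 < k c
        · rw [dif_pos hj2,
            hAv0 b 0 hi1 c (j1 + 1) hj2 (by rw [lamOf_mk, lamOf_mk]; omega), neg_zero]
        · rw [dif_neg hj2, neg_zero]
      · obtain ⟨i, rfl⟩ : ∃ i, i1 = i + 1 := ⟨i1 - 1, by omega⟩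
        rw [repr_lie_e_succ bI e he x b c i hi1 j1 hj1]
        simp only [hxe]
        rw [hAv0 b i (Nat.lt_of_succ_lt hi1) c j1 hj1 (by rw [lamOf_mk, lamOf_mk]; omega)]
        by_cases hj2 : j1 + 1 < k c
        · rw [dif_pos hj2,
            hAv0 b (i + 1) hi1 c (j1 + 1) hj2 (by rw [lamOf_mk, lamOf_mk]; omega), sub_zero]
        · rw [dif_neg hj2, sub_zero]

end Entries

end AuxGoodGrading

theorem exists_good_even_grading
    (V : Type*) [AddCommGroup V] [Module ℂ V] [FiniteDimensional ℂ V]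
    (V₀ V₁ : Submodule ℂ V) (hcompl : IsCompl V₀ V₁)
    (e : Module.End ℂ V) (he_nil : IsNilpotent e)
    (hE0 : ∀ x ∈ V₀, e x ∈ V₀) (hE1 : ∀ x ∈ V₁, e x ∈ V₁) :
    ∃ h : Module.End ℂ V,
      (∀ x ∈ V₀, h x ∈ V₀) ∧ (∀ x ∈ V₁, h x ∈ V₁) ∧
      (⨆ j : ℤ, Module.End.eigenspace h ((2 * j : ℤ) : ℂ)) = ⊤ ∧
      ⁅h, e⁆ = (2 : ℂ) • e ∧ IsGoodPair h e := by
  classical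
  obtain ⟨m, hm⟩ := he_nil
  set e₀ : Module.End ℂ V₀ := e.restrict hE0 with he₀def
  set e₁ : Module.End ℂ V₁ := e.restrict hE1 with he₁def
  have hc₀ : ∀ (i : ℕ) (x : V₀), (((e₀ ^ i) x : V₀) : V) = (e ^ i) (x : V) := by
    intro i x
    rw [he₀def, Module.End.pow_restrict, LinearMap.restrict_coe_apply]
  have hc₁ : ∀ (i : ℕ) (x : V₁), (((e₁ ^ i) x : V₁) : V) = (e ^ i) (x : V) := by
    intro i x
    rw [he₁def, Module.End.pow_restrict, LinearMap.restrict_coe_apply]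
  have hnil₀ : IsNilpotent e₀ :=
    ⟨m, LinearMap.ext fun x => Subtype.ext (by rw [hc₀, hm]; simp)⟩
  have hnil₁ : IsNilpotent e₁ :=
    ⟨m, LinearMap.ext fun x => Subtype.ext (by rw [hc₁, hm]; simp)⟩
  obtain ⟨B₀, iB₀, k₀, v₀, hpos₀, hzero₀, hindep₀, hspan₀⟩ :=
    exists_jordan_aux (Module.finrank ℂ V₀) V₀ e₀ hnil₀ le_rfl
  obtain ⟨B₁, iB₁, k₁, v₁, hpos₁, hzero₁, hindep₁, hspan₁⟩ :=
    exists_jordan_aux (Module.finrank ℂ V₁) V₁ e₁ hnil₁ le_rfl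
  haveI := iB₀; haveI := iB₁
  set k : B₀ ⊕ B₁ → ℕ := Sum.elim k₀ k₁ with hk
  set wv : B₀ ⊕ B₁ → V := Sum.elim (fun b => ((v₀ b : V))) (fun b => ((v₁ b : V))) with hwv
  set fam : ((b : B₀ ⊕ B₁) × Fin (k b)) → V := fun p => (e ^ ((p.2 : ℕ))) (wv p.1) with hfam
  set fam₀ : ((b : B₀) × Fin (k₀ b)) → V := fun p => (e ^ ((p.2 : ℕ))) ((v₀ p.1 : V))
    with hfam₀
  set fam₁ : ((b : B₁) × Fin (k₁ b)) → V := fun p => (e ^ ((p.2 : ℕ))) ((v₁ p.1 : V))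
    with hfam₁
  have hfam₀c : ∀ p, fam₀ p = ((e₀ ^ ((p.2 : ℕ))) (v₀ p.1) : V) := fun p => (hc₀ _ _).symm
  have hfam₁c : ∀ p, fam₁ p = ((e₁ ^ ((p.2 : ℕ))) (v₁ p.1) : V) := fun p => (hc₁ _ _).symm
  have hmem₀ : ∀ p, fam₀ p ∈ V₀ := fun p => by
    rw [hfam₀c]; exact Submodule.coe_mem _
  have hmem₁ : ∀ p, fam₁ p ∈ V₁ := fun p => by
    rw [hfam₁c]; exact Submodule.coe_mem _
  have hind₀V : LinearIndependent ℂ fam₀ := by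
    have h2 := hindep₀.map' V₀.subtype (Submodule.ker_subtype V₀)
    have heq : (V₀.subtype ∘ fun p : (b : B₀) × Fin (k₀ b) => (e₀ ^ ((p.2 : ℕ))) (v₀ p.1))
        = fam₀ := funext fun p => (hfam₀c p).symm
    rwa [heq] at h2
  have hind₁V : LinearIndependent ℂ fam₁ := by
    have h2 := hindep₁.map' V₁.subtype (Submodule.ker_subtype V₁)
    have heq : (V₁.subtype ∘ fun p : (b : B₁) × Fin (k₁ b) => (e₁ ^ ((p.2 : ℕ))) (v₁ p.1))
        = fam₁ := funext fun p => (hfam₁c p).symm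
    rwa [heq] at h2
  have hV₀span : V₀ = Submodule.span ℂ (Set.range fam₀) := by
    have h1 : Submodule.map V₀.subtype (Submodule.span ℂ (Set.range
        (fun p : (b : B₀) × Fin (k₀ b) => (e₀ ^ ((p.2 : ℕ))) (v₀ p.1)))) = V₀ := by
      rw [hspan₀, Submodule.map_subtype_top]
    rw [← h1, Submodule.map_span, ← Set.range_comp]
    exact congrArg _ (congrArg Set.range (funext fun p => (hfam₀c p).symm))
  have hV₁span : V₁ = Submodule.span ℂ (Set.range fam₁) := by
    have h1 : Submodule.map V₁.subtype (Submodule.span ℂ (Set.range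
        (fun p : (b : B₁) × Fin (k₁ b) => (e₁ ^ ((p.2 : ℕ))) (v₁ p.1)))) = V₁ := by
      rw [hspan₁, Submodule.map_subtype_top]
    rw [← h1, Submodule.map_span, ← Set.range_comp]
    exact congrArg _ (congrArg Set.range (funext fun p => (hfam₁c p).symm))
  set σ := sigmaSumEquiv (fun s : B₀ ⊕ B₁ => Fin (k s)) with hσ
  have hsum_eq : (fam ∘ σ) = Sum.elim fam₀ fam₁ := by
    funext q; rcases q with ⟨b, i⟩ | ⟨b, i⟩ <;> rfl
  have hindep_fam : LinearIndependent ℂ fam := by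
    have h1 : LinearIndependent ℂ (Sum.elim fam₀ fam₁) :=
      hind₀V.sum_type hind₁V
        (hcompl.disjoint.mono (le_of_eq hV₀span.symm) (le_of_eq hV₁span.symm))
    rw [← hsum_eq] at h1
    exact (linearIndependent_equiv σ).mp h1
  have hspan_fam : Submodule.span ℂ (Set.range fam) = ⊤ := by
    rw [eq_top_iff, ← hcompl.sup_eq_top]
    refine sup_le ?_ ?_
    · rw [hV₀span, Submodule.span_le]
      rintro _ ⟨p, rfl⟩
      exact Submodule.subset_span ⟨σ (Sum.inl p), rfl⟩
    · rw [hV₁span, Submodule.span_le]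
      rintro _ ⟨p, rfl⟩
      exact Submodule.subset_span ⟨σ (Sum.inr p), rfl⟩
  set bI : Module.Basis ((b : B₀ ⊕ B₁) × Fin (k b)) ℂ V := Module.Basis.mk hindep_fam (by rw [hspan_fam])
    with hbIdef
  have hbI : ∀ p, bI p = fam p := fun p => by rw [hbIdef, Module.Basis.mk_apply]
  have hwzero : ∀ b, (e ^ (k b)) (wv b) = 0 := by
    rintro (b | b)
    · show (e ^ (k₀ b)) ((v₀ b : V)) = 0
      rw [← hc₀, hzero₀ b]
      simp
    · show (e ^ (k₁ b)) ((v₁ b : V)) = 0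
      rw [← hc₁, hzero₁ b]
      simp
  have he_act : ∀ (c : B₀ ⊕ B₁) (j : ℕ) (hj : j < k c),
      e (bI ⟨c, ⟨j, hj⟩⟩) = if hj2 : j + 1 < k c then bI ⟨c, ⟨j + 1, hj2⟩⟩ else 0 := by
    intro c j hj
    rw [hbI]
    have h1 : e (fam ⟨c, ⟨j, hj⟩⟩) = (e ^ (j + 1)) (wv c) := by
      show e ((e ^ j) (wv c)) = _
      rw [← Module.End.mul_apply, ← pow_succ']
    rw [h1]
    by_cases hj2 : j + 1 < k c
    · rw [dif_pos hj2, hbI]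
    · rw [dif_neg hj2]
      have hjk : j + 1 = k c := by omega
      rw [hjk, hwzero]
  set h : Module.End ℂ V := bI.constr ℂ (fun p => ((lamOf k p : ℤ) : ℂ) • bI p) with hhdef
  have hh : ∀ p, h (bI p) = ((lamOf k p : ℤ) : ℂ) • bI p := fun p => by
    rw [hhdef, Module.Basis.constr_basis]
  refine ⟨h, ?_, ?_, ?_, ?_, ?_, ?_⟩
  · -- h preserves V₀
    intro x hx
    rw [hV₀span] at hx
    induction hx using Submodule.span_induction with
    | mem z hz =>
      obtain ⟨p, rfl⟩ := hz
      have hzb : fam₀ p = bI (σ (Sum.inl p)) := by rw [hbI]; rfl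
      rw [hzb, hh]
      exact Submodule.smul_mem _ _ (by rw [← hzb]; exact hmem₀ p)
    | zero => rw [map_zero]; exact zero_mem _
    | add a b _ _ ha hb => rw [map_add]; exact add_mem ha hb
    | smul c a _ ha => rw [map_smul]; exact Submodule.smul_mem _ _ ha
  · -- h preserves V₁
    intro x hx
    rw [hV₁span] at hx
    induction hx using Submodule.span_induction with
    | mem z hz =>
      obtain ⟨p, rfl⟩ := hz
      have hzb : fam₁ p = bI (σ (Sum.inr p)) := by rw [hbI]; rfl
      rw [hzb, hh]
      exact Submodule.smul_mem _ _ (by rw [← hzb]; exact hmem₁ p)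
    | zero => rw [map_zero]; exact zero_mem _
    | add a b _ _ ha hb => rw [map_add]; exact add_mem ha hb
    | smul c a _ ha => rw [map_smul]; exact Submodule.smul_mem _ _ ha
  · -- diagonalizable with even integer eigenvalues
    rw [eq_top_iff, ← hspan_fam, Submodule.span_le]
    rintro _ ⟨p, rfl⟩
    obtain ⟨r, hr⟩ := lamOf_even k p
    have hp : fam p ∈ Module.End.eigenspace h ((2 * r : ℤ) : ℂ) := by
      rw [Module.End.mem_eigenspace_iff, ← hbI p, hh]
      have hlr : lamOf k p = 2 * r := by omega
      rw [hlr]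
    exact (le_iSup (fun j : ℤ => Module.End.eigenspace h ((2 * j : ℤ) : ℂ)) r) hp
  · -- bracket relation
    refine Module.Basis.ext bI fun p => ?_
    rcases p with ⟨c, ⟨j, hj⟩⟩
    have h1 : ⁅h, e⁆ (bI ⟨c, ⟨j, hj⟩⟩)
        = h (e (bI ⟨c, ⟨j, hj⟩⟩)) - e (h (bI ⟨c, ⟨j, hj⟩⟩)) := by
      rw [Ring.lie_def]; rfl
    by_cases hj2 : j + 1 < k c
    · have hA1 : h (e (bI ⟨c, ⟨j, hj⟩⟩))
          = ((lamOf k ⟨c, ⟨j + 1, hj2⟩⟩ : ℤ) : ℂ) • bI ⟨c, ⟨j + 1, hj2⟩⟩ := by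
        rw [he_act c j hj, dif_pos hj2, hh]
      have hA2 : e (h (bI ⟨c, ⟨j, hj⟩⟩))
          = ((lamOf k ⟨c, ⟨j, hj⟩⟩ : ℤ) : ℂ) • bI ⟨c, ⟨j + 1, hj2⟩⟩ := by
        rw [hh, map_smul, he_act c j hj, dif_pos hj2]
      have hA3 : ((2 : ℂ) • e) (bI ⟨c, ⟨j, hj⟩⟩) = (2 : ℂ) • bI ⟨c, ⟨j + 1, hj2⟩⟩ := by
        rw [LinearMap.smul_apply, he_act c j hj, dif_pos hj2]
      rw [h1, hA1, hA2, hA3, lamOf_succ k c j hj2 hj]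
      push_cast
      module
    · have hA2 : e (h (bI ⟨c, ⟨j, hj⟩⟩)) = 0 := by
        rw [hh, map_smul, he_act c j hj, dif_neg hj2, smul_zero]
      have hA3 : ((2 : ℂ) • e) (bI ⟨c, ⟨j, hj⟩⟩) = 0 := by
        rw [LinearMap.smul_apply, he_act c j hj, dif_neg hj2, smul_zero]
      rw [h1, he_act c j hj, dif_neg hj2, map_zero, hA2, hA3, sub_zero]
  · -- goodness: injectivity
    intro d hd x hx x' hx' heq
    have heq' : ⁅e, x⁆ = ⁅e, x'⁆ := heq
    have hsx := (mem_gradedPiece_iff bI h hh x d).mp hx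
    have hsx' := (mem_gradedPiece_iff bI h hh x' d).mp hx'
    have hyk : ⁅e, x - x'⁆ = 0 := by
      rw [Ring.lie_def, Ring.lie_def] at heq'
      rw [Ring.lie_def, ← sub_eq_zero.mpr heq']
      noncomm_ring
    have hsupp : ∀ p q, lamOf k p - lamOf k q ≠ d →
        bI.repr ((x - x') (bI q)) p = 0 := by
      intro p q hne
      rw [LinearMap.sub_apply, map_sub, Finsupp.sub_apply, hsx p q hne, hsx' p q hne,
        sub_self]
    have hzero := entry_zero_of_ker bI e he_act (x - x') hyk d hd hsupp
    have hxx : x - x' = 0 := by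
      refine entry_ext bI (x - x') 0 fun p q => ?_
      rw [hzero p q, LinearMap.zero_apply, map_zero]
      rfl
    exact sub_eq_zero.mp hxx
  · -- goodness: surjectivity
    intro d hd y hy
    have hsy := (mem_gradedPiece_iff bI h hh y (d + 2)).mp hy
    obtain ⟨x, hxsupp, hxbr⟩ := surj_core bI e he_act (d + 2) (by omega) y hsy
    have hds : d + 2 - 2 = d := by ring
    rw [hds] at hxsupp
    exact ⟨x, (mem_gradedPiece_iff bI h hh x d).mpr hxsupp, hxbr⟩
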